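/- arXiv:1505.06445 — 7 statements merged into one kernel-verified Lean document; each statement's English description precedes it below -/
import Mathlib

section
/- Let A be a local domain with principal maximal ideal m = xA for some nonzero x, and let p = ⋂_{n≥0} m^n. Then p is a prime ideal of A, p = x·p, and every prime ideal of A properly contained in m is contained in p. -/
/-- Let A be a local domain with principal maximal ideal m = xA for some nonzero x,
and let p = ⋂_{n≥0} m^n. Then p is a prime ideal of A, p = x·p, and every prime ideal
of A properly contained in m is contained in p. -/
theorem stmt0 {A : Type*} [CommRing A] [IsDomain A] [IsLocalRing A]
    (x : A) (hx : x ≠ 0)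
    (hm : IsLocalRing.maximalIdeal A = Ideal.span {x})
    (p : Ideal A) (hp : p = ⨅ n : ℕ, (IsLocalRing.maximalIdeal A) ^ n) :
    p.IsPrime ∧ p = Ideal.span {x} * p ∧
      ∀ q : Ideal A, q.IsPrime → q < IsLocalRing.maximalIdeal A → q ≤ p := by
  have hmem : ∀ a : A, a ∈ p ↔ ∀ n : ℕ, x ^ n ∣ a := by
    intro a
    rw [hp]
    rw [Submodule.mem_iInf]
    constructor
    · intro h n
      have := h n
      rw [hm, Ideal.span_singleton_pow, Ideal.mem_span_singleton] at this
      exact this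
    · intro h n
      rw [hm, Ideal.span_singleton_pow, Ideal.mem_span_singleton]
      exact h n
  -- key factorization lemma
  have key : ∀ a : A, a ∉ p → ∃ (n : ℕ) (u : A), IsUnit u ∧ a = x ^ n * u := by
    intro a ha
    rw [hmem] at ha
    push_neg at ha
    have hex : ∃ n, ¬ x ^ n ∣ a := ha
    classical
    set N := Nat.find hex with hN
    have hNdvd : ¬ x ^ N ∣ a := Nat.find_spec hex
    have hN0 : N ≠ 0 := by
      intro h
      apply hNdvd
      rw [h]; simp
    have hprev : x ^ (N - 1) ∣ a := by
      by_contra hc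
      have hle : N ≤ N - 1 := Nat.find_le hc
      omega
    obtain ⟨u, hu⟩ := hprev
    refine ⟨N - 1, u, ?_, hu⟩
    by_contra hnu
    have humem : u ∈ IsLocalRing.maximalIdeal A := hnu
    rw [hm, Ideal.mem_span_singleton] at humem
    obtain ⟨c, hc⟩ := humem
    apply hNdvd
    refine ⟨c, ?_⟩
    rw [hu, hc, show x ^ N = x ^ (N - 1) * x from by rw [← pow_succ]; congr 1; omega]
    ring
  have hprime : p.IsPrime := by
    constructor
    · intro htop
      have : (1 : A) ∈ p := htop ▸ Submodule.mem_top
      rw [hmem] at this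
      have h1 := this 1
      rw [pow_one] at h1
      have : IsUnit x := isUnit_of_dvd_one h1
      have : x ∈ IsLocalRing.maximalIdeal A := by
        rw [hm]; exact Ideal.mem_span_singleton_self x
      exact (IsLocalRing.mem_maximalIdeal x).mp ‹x ∈ _› ‹IsUnit x›
    · intro a b hab
      by_contra hc
      push_neg at hc
      obtain ⟨ha, hb⟩ := hc
      obtain ⟨i, u, hu, hau⟩ := key a ha
      obtain ⟨j, v, hv, hbv⟩ := key b hb
      rw [hmem] at hab
      have hd := hab (i + j + 1)
      rw [hau, hbv] at hd
      have heq : a * b = 0 ∨ True := Or.inr trivial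
      have : x ^ (i + j + 1) ∣ x ^ (i + j) * (u * v) := by
        rw [show x ^ i * u * (x ^ j * v) = x ^ (i + j) * (u * v) by ring] at hd
        exact hd
      rw [pow_succ, mul_comm (x ^ (i+j)) x] at this
      have hxij : (x : A) ^ (i + j) ≠ 0 := pow_ne_zero _ hx
      have hxdvd : x ∣ u * v := by
        obtain ⟨c, hc⟩ := this
        refine ⟨c, mul_left_cancel₀ hxij ?_⟩
        rw [hc]; ring
      have : x ∈ IsLocalRing.maximalIdeal A := by
        rw [hm]; exact Ideal.mem_span_singleton_self x
      have hxnu : ¬ IsUnit x := (IsLocalRing.mem_maximalIdeal x).mp this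
      exact hxnu (isUnit_of_dvd_unit hxdvd (hu.mul hv))
  refine ⟨hprime, ?_, ?_⟩
  · apply le_antisymm
    · intro a ha
      have h1 : x ∣ a := by rw [hmem] at ha; simpa using ha 1
      obtain ⟨c, hc⟩ := h1
      have hcp : c ∈ p := by
        rw [hmem]
        intro n
        rw [hmem] at ha
        have := ha (n + 1)
        obtain ⟨d, hd⟩ := this
        refine ⟨d, mul_left_cancel₀ hx ?_⟩
        rw [← hc, hd, pow_succ]
        ring
      rw [hc]
      exact Ideal.mul_mem_mul (Ideal.mem_span_singleton_self x) hcp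
    · exact Ideal.mul_le_right
  · intro q hq hlt a haq
    have hxq : x ∉ q := by
      intro hxq
      have : IsLocalRing.maximalIdeal A ≤ q := by
        rw [hm, Ideal.span_le]
        simpa using hxq
      exact absurd (le_antisymm hlt.le this) hlt.ne
    rw [hmem]
    intro n
    have : ∀ m : ℕ, ∃ b ∈ q, a = x ^ m * b := by
      intro m
      induction m with
      | zero => exact ⟨a, haq, by simp⟩
      | succ k ih =>
        obtain ⟨b, hbq, hab⟩ := ih
        have : b ∈ IsLocalRing.maximalIdeal A := hlt.le hbq
        rw [hm, Ideal.mem_span_singleton] at this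
        obtain ⟨c, hc⟩ := this
        have hcq : c ∈ q := by
          have hxc : x * c ∈ q := hc ▸ hbq
          rcases hq.mem_or_mem hxc with h | h
          · exact absurd h hxq
          · exact h
        exact ⟨c, hcq, by rw [hab, hc, pow_succ]; ring⟩
    obtain ⟨b, _, hab⟩ := this n
    exact ⟨b, hab⟩
end

section
/- Let A be a local domain with principal maximal ideal m = xA, x ≠ 0, and let p = ⋂_{n≥0} m^n. Then A is a valuation domain if and only if the localization A_p is a valuation domain. -/
private lemma step_lemma {A : Type*} [CommRing A] [IsDomain A] [IsLocalRing A]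
    (x : A) (hx : x ≠ 0) (hm : IsLocalRing.maximalIdeal A = Ideal.span {x}) :
    ∀ (k : ℕ) (a b : A), b ∣ a * x ^ k → b ∣ a ∨ a ∣ b := by
  intro k
  induction k with
  | zero => intro a b h; left; simpa using h
  | succ n ih =>
    intro a b h
    obtain ⟨z, hz⟩ := h
    by_cases hzu : IsUnit z
    · right
      have h2 : a ∣ b * z := ⟨x ^ (n+1), hz.symm⟩
      exact (hzu.dvd_mul_right).mp h2
    · have hzm : z ∈ IsLocalRing.maximalIdeal A := hzu
      rw [hm, Ideal.mem_span_singleton] at hzm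
      obtain ⟨z₁, rfl⟩ := hzm
      have : b ∣ a * x ^ n := by
        refine ⟨z₁, mul_left_cancel₀ hx ?_⟩
        have : a * x ^ (n+1) = b * (x * z₁) := hz
        ring_nf at this ⊢
        linear_combination this
      exact ih a b this

private lemma unit_pow_lemma {A : Type*} [CommRing A] [IsDomain A] [IsLocalRing A]
    (x : A) (hm : IsLocalRing.maximalIdeal A = Ideal.span {x}) :
    ∀ (n : ℕ) (s : A), s ∉ (IsLocalRing.maximalIdeal A) ^ n → ∃ (k : ℕ) (u : A), IsUnit u ∧ s = u * x ^ k := by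
  intro n
  induction n with
  | zero => intro s hs; exact absurd (by simp) hs
  | succ n ih =>
    intro s hs
    by_cases hsu : IsUnit s
    · exact ⟨0, s, hsu, by simp⟩
    · have hsm : s ∈ IsLocalRing.maximalIdeal A := hsu
      rw [hm, Ideal.mem_span_singleton] at hsm
      obtain ⟨s₁, rfl⟩ := hsm
      have hs₁ : s₁ ∉ (IsLocalRing.maximalIdeal A) ^ n := by
        intro h
        apply hs
        have hx : x ∈ IsLocalRing.maximalIdeal A := by
          rw [hm]; exact Ideal.mem_span_singleton_self x
        rw [pow_succ']
        exact Ideal.mul_mem_mul hx h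
      obtain ⟨k, u, hu, rfl⟩ := ih s₁ hs₁
      exact ⟨k + 1, u, hu, by ring⟩

/-- Let A be a local domain with principal maximal ideal m = xA, x ≠ 0, and let
p = ⋂_{n≥0} m^n. Then A is a valuation domain if and only if A_p is a valuation domain. -/
theorem stmt1 {A : Type*} [CommRing A] [IsDomain A] [IsLocalRing A]
    (x : A) (hx : x ≠ 0)
    (hm : IsLocalRing.maximalIdeal A = Ideal.span {x})
    (p : Ideal A) (hp : p = ⨅ n : ℕ, (IsLocalRing.maximalIdeal A) ^ n)
    [hpp : p.IsPrime] :
    ValuationRing A ↔ ValuationRing (Localization.AtPrime p) := by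
  constructor
  · intro hV
    rw [ValuationRing.iff_dvd_total] at hV ⊢
    constructor
    intro r t
    obtain ⟨⟨a, s⟩, hr⟩ := IsLocalization.surj p.primeCompl r
    obtain ⟨⟨b, s'⟩, ht⟩ := IsLocalization.surj p.primeCompl t
    have hus : IsUnit (algebraMap A (Localization.AtPrime p) s) :=
      IsLocalization.map_units _ s
    have hus' : IsUnit (algebraMap A (Localization.AtPrime p) s') :=
      IsLocalization.map_units _ s'
    have har : Associated r (algebraMap A (Localization.AtPrime p) a) := by
      exact ⟨hus.unit, hr⟩
    have hbt : Associated t (algebraMap A (Localization.AtPrime p) b) := by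
      exact ⟨hus'.unit, ht⟩
    rcases hV.total a b with h | h
    · exact Or.inl (har.dvd.trans ((map_dvd _ h).trans hbt.symm.dvd))
    · exact Or.inr (hbt.dvd.trans ((map_dvd _ h).trans har.symm.dvd))
  · intro hV
    rw [ValuationRing.iff_dvd_total] at hV ⊢
    constructor
    intro a b
    have key : ∀ a b : A,
        algebraMap A (Localization.AtPrime p) b ∣ algebraMap A (Localization.AtPrime p) a →
        b ∣ a ∨ a ∣ b := by
      intro a b hdvd
      obtain ⟨r, hr⟩ := hdvd
      obtain ⟨⟨c, s⟩, hcs⟩ := IsLocalization.surj p.primeCompl r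
      have hinj : Function.Injective (algebraMap A (Localization.AtPrime p)) :=
        IsLocalization.injective _ p.primeCompl_le_nonZeroDivisors
      have heq : a * (s : A) = b * c := by
        apply hinj
        rw [map_mul, map_mul, hr, mul_assoc, hcs]
      have hsn : (s : A) ∉ ⨅ n : ℕ, (IsLocalRing.maximalIdeal A) ^ n := by
        rw [← hp]; exact s.2
      simp only [Ideal.mem_iInf, not_forall] at hsn
      obtain ⟨n, hn⟩ := hsn
      obtain ⟨k, u, hu, hsk⟩ := unit_pow_lemma x hm n s hn
      have : b ∣ a * x ^ k := by
        have h1 : b ∣ a * (s : A) := ⟨c, heq⟩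
        rw [hsk] at h1
        have : b ∣ a * x ^ k * u := by
          refine dvd_trans h1 (dvd_of_eq ?_); ring
        exact (hu.dvd_mul_right).mp this
      exact step_lemma x hx hm k a b this
    rcases hV.total (algebraMap A (Localization.AtPrime p) a)
        (algebraMap A (Localization.AtPrime p) b) with h | h
    · exact key b a h
    · exact (key a b h).symm
end

section
/- Let V be a valuation domain with fraction field F and let P be a nonzero idempotent prime ideal of V. Then (P :_F P) = V_P, where (P :_F P) = { q ∈ F : qP ⊆ P } and V_P is the localization of V at P. -/
/-- Let V be a valuation domain with fraction field F and let P be a nonzero idempotent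
prime ideal of V. Then (P :_F P) = V_P, where (P :_F P) = { q ∈ F : qP ⊆ P } and V_P is
the localization of V at P (viewed inside F as quotients a/b with a ∈ V, b ∈ V \ P). -/
theorem stmt3 {V F : Type*} [CommRing V] [IsDomain V] [ValuationRing V]
    [Field F] [Algebra V F] [IsFractionRing V F]
    (P : Ideal V) (hP : P.IsPrime) (hP0 : P ≠ ⊥) (hPid : P * P = P) :
    { q : F | ∀ a ∈ P, q * algebraMap V F a ∈ (algebraMap V F) '' P } =
      { q : F | ∃ a : V, ∃ b : V, b ∉ P ∧ q * algebraMap V F b = algebraMap V F a } := by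
  have hinj : Function.Injective (algebraMap V F) := IsFractionRing.injective V F
  have hone : (1 : V) ∉ P := fun h => hP.ne_top ((Ideal.eq_top_iff_one P).mpr h)
  ext q
  simp only [Set.mem_setOf_eq]
  constructor
  · intro hq
    obtain ⟨x, y, hy, hxy⟩ := IsFractionRing.div_surjective (A := V) q
    have hy0 : y ≠ 0 := nonZeroDivisors.ne_zero hy
    have hmy : algebraMap V F y ≠ 0 := fun h => hy0 (hinj (by simpa using h))
    have hqy : q * algebraMap V F y = algebraMap V F x := by
      rw [← hxy]; field_simp
    obtain ⟨c, hc | hc⟩ := ValuationRing.cond x y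
    · -- x * c = y
      by_cases hx : x = 0
      · refine ⟨0, 1, hone, ?_⟩
        have hq0 : q = 0 := by
          have := hqy
          rw [hx, map_zero] at this
          exact (mul_eq_zero.mp this).resolve_right hmy
        simp [hq0]
      · have hmx : algebraMap V F x ≠ 0 := fun h => hx (hinj (by simpa using h))
        have hqc : q * algebraMap V F c = 1 := by
          have hxc : algebraMap V F x * algebraMap V F c = algebraMap V F y := by
            rw [← map_mul, hc]
          have h1 : q * algebraMap V F x * algebraMap V F c = algebraMap V F x := by
            rw [mul_assoc, hxc, hqy]
          have h2 : algebraMap V F x * (q * algebraMap V F c) = algebraMap V F x * 1 := by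
            rw [mul_one]; linear_combination h1
          exact mul_left_cancel₀ hmx h2
        have hcP : c ∉ P := by
          intro hcmem
          obtain ⟨p, hpP, hp⟩ := hq c hcmem
          rw [hqc] at hp
          have : p = 1 := hinj (by simpa using hp)
          exact hone (this ▸ hpP)
        exact ⟨1, c, hcP, by rw [hqc, map_one]⟩
    · -- y * c = x, so q = algebraMap c
      refine ⟨c, 1, hone, ?_⟩
      have : q * algebraMap V F y = algebraMap V F c * algebraMap V F y := by
        rw [hqy, ← map_mul, mul_comm c y, hc]
      have hqc : q = algebraMap V F c := mul_right_cancel₀ hmy this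
      simp [hqc]
  · rintro ⟨a, b, hbP, hab⟩ p hp
    obtain ⟨c, hc | hc⟩ := ValuationRing.cond b p
    · -- b * c = p
      have hcP : c ∈ P := by
        rcases hP.mem_or_mem (hc ▸ hp : b * c ∈ P) with h | h
        · exact absurd h hbP
        · exact h
      refine ⟨a * c, Ideal.mul_mem_left P a hcP, ?_⟩
      rw [← hc, map_mul, map_mul, ← mul_assoc, hab]
    · -- p * c = b would put b in P
      exact absurd (hc ▸ Ideal.mul_mem_right c P hp) hbP
end

section
/- Let F be a field, V a valuation subring of F, and T a subring of F, and suppose S = V ∩ T is a local ring with maximal ideal N. Let S' be a ring with S ⊆ S' ⊆ T such that N·S' ≠ S'. Then the units of S' contained in S' are exactly recognizable from S: every unit u of S' with u, u^{-1} ∈ S' satisfies u ∈ S or u^{-1} ∈ S, and consequently the group of units of S' equals the group of units of S. -/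
/-- Let F be a field, V a valuation subring of F, T a subring of F, and suppose
S = V ∩ T is a local ring with maximal ideal N. Let S' be a ring with S ⊆ S' ⊆ T such
that N·S' ≠ S'. Then every unit u of S' (u, u⁻¹ ∈ S') satisfies u ∈ S and u⁻¹ ∈ S;
in particular the group of units of S' equals the group of units of S. -/
theorem stmt11 {F : Type*} [Field F] (V : ValuationSubring F) (T : Subring F)
    [IsLocalRing ↥(V.toSubring ⊓ T)]
    (S' : Subring F) (hSS' : V.toSubring ⊓ T ≤ S') (hS'T : S' ≤ T)
    (hN : Ideal.map (Subring.inclusion hSS')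
        (IsLocalRing.maximalIdeal ↥(V.toSubring ⊓ T)) ≠ ⊤) :
    ∀ u : F, u ∈ S' → u⁻¹ ∈ S' →
      u ∈ V.toSubring ⊓ T ∧ u⁻¹ ∈ V.toSubring ⊓ T := by
  intro u hu hinv
  by_cases hu0 : u = 0
  · subst hu0
    simp only [inv_zero]
    exact ⟨Subring.zero_mem _, Subring.zero_mem _⟩
  -- key: if w ≠ 0, w ∈ S', w⁻¹ ∈ S', w ∈ V then w⁻¹ ∈ V
  have key : ∀ w : F, w ≠ 0 → w ∈ S' → w⁻¹ ∈ S' → w ∈ V.toSubring →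
      w⁻¹ ∈ V.toSubring := by
    intro w hw0 hw hwinv hwV
    by_contra hVi
    have hwS : w ∈ V.toSubring ⊓ T := ⟨hwV, hS'T hw⟩
    -- w is not a unit in S
    have hnu : ¬ IsUnit (⟨w, hwS⟩ : ↥(V.toSubring ⊓ T)) := by
      rintro ⟨⟨a, b, hab, hba⟩, ha⟩
      apply hVi
      have : (b : F) = w⁻¹ := by
        have h1 : (a : F) * (b : F) = 1 := congrArg Subtype.val hab
        have haw : (a : F) = w := congrArg Subtype.val ha
        rw [haw] at h1
        exact eq_inv_of_mul_eq_one_right h1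
      rw [← this]
      exact b.2.1
    have hmem : (⟨w, hwS⟩ : ↥(V.toSubring ⊓ T)) ∈
        IsLocalRing.maximalIdeal ↥(V.toSubring ⊓ T) := hnu
    have hmap : (Subring.inclusion hSS') ⟨w, hwS⟩ ∈
        Ideal.map (Subring.inclusion hSS')
          (IsLocalRing.maximalIdeal ↥(V.toSubring ⊓ T)) :=
      Ideal.mem_map_of_mem _ hmem
    apply hN
    apply Ideal.eq_top_of_isUnit_mem _ hmap
    refine ⟨⟨(Subring.inclusion hSS') ⟨w, hwS⟩, ⟨w⁻¹, hwinv⟩, ?_, ?_⟩, rfl⟩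
    · ext; simpa using mul_inv_cancel₀ hw0
    · ext; simpa using inv_mul_cancel₀ hw0
  have huinv0 : u⁻¹ ≠ 0 := inv_ne_zero hu0
  rcases V.mem_or_inv_mem u with hV | hV
  · have h2 := key u hu0 hu hinv hV
    exact ⟨⟨hV, hS'T hu⟩, ⟨h2, hS'T hinv⟩⟩
  · have h2 := key u⁻¹ huinv0 hinv (by rw [inv_inv]; exact hu) hV
    rw [inv_inv] at h2
    exact ⟨⟨h2, hS'T hu⟩, ⟨hV, hS'T hinv⟩⟩
end

section
/- Let F be a field, V a valuation subring of F, T a subring of F, and suppose S = V ∩ T is a local domain with fraction field F. Let y, z ∈ S be nonzero elements such that T = S[1/y] = S[1/z]. Then yS ⊆ zS or zS ⊆ yS. -/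
/-- Let F be a field, V a valuation subring of F, T a subring of F, and suppose
S = V ∩ T is a local domain with fraction field F. Let y, z ∈ S be nonzero elements
such that T = S[1/y] = S[1/z]. Then yS ⊆ zS or zS ⊆ yS. -/
theorem stmt12 {F : Type*} [Field F] (V : ValuationSubring F) (T : Subring F)
    [IsLocalRing ↥(V.toSubring ⊓ T)]
    (hfrac : ∀ q : F, ∃ a b : F, a ∈ V.toSubring ⊓ T ∧ b ∈ V.toSubring ⊓ T ∧
      b ≠ 0 ∧ q * b = a)
    (y z : F) (hy : y ∈ V.toSubring ⊓ T) (hz : z ∈ V.toSubring ⊓ T)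
    (hy0 : y ≠ 0) (hz0 : z ≠ 0)
    (hTy : T = Subring.closure ((V.toSubring ⊓ T : Subring F) ∪ {y⁻¹}))
    (hTz : T = Subring.closure ((V.toSubring ⊓ T : Subring F) ∪ {z⁻¹})) :
    { q : F | ∃ s ∈ V.toSubring ⊓ T, q = y * s } ⊆
        { q : F | ∃ s ∈ V.toSubring ⊓ T, q = z * s } ∨
      { q : F | ∃ s ∈ V.toSubring ⊓ T, q = z * s } ⊆
        { q : F | ∃ s ∈ V.toSubring ⊓ T, q = y * s } := by
  have hyinvT : y⁻¹ ∈ T := by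
    rw [hTy]; exact Subring.subset_closure (Or.inr rfl)
  have hzinvT : z⁻¹ ∈ T := by
    rw [hTz]; exact Subring.subset_closure (Or.inr rfl)
  rcases V.mem_or_inv_mem (y * z⁻¹) with h | h
  · left
    have hmem : y * z⁻¹ ∈ V.toSubring ⊓ T := ⟨h, T.mul_mem hy.2 hzinvT⟩
    rintro q ⟨s, hs, rfl⟩
    exact ⟨y * z⁻¹ * s, (V.toSubring ⊓ T).mul_mem hmem hs, by field_simp⟩
  · right
    have h' : z * y⁻¹ ∈ V.toSubring := by
      simpa [mul_inv_rev, mul_comm] using h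
    have hmem : z * y⁻¹ ∈ V.toSubring ⊓ T := ⟨h', T.mul_mem hz.2 hyinvT⟩
    rintro q ⟨s, hs, rfl⟩
    exact ⟨z * y⁻¹ * s, (V.toSubring ⊓ T).mul_mem hmem hs, by field_simp⟩
end

section
/- Let S be a local domain with maximal ideal N and fraction field F, and let x ∈ N be a nonzero element with N = √(xS). Set T = S[1/x] ⊆ F. If ⋂_{n≥0} x^n S ≠ 0, then (S :_F T) = ⋂_{n≥0} x^n S, so T is a fractional ideal of S; if moreover T is completely integrally closed, then T is the complete integral closure of S. -/
/-- Let S be a local domain with maximal ideal N and fraction field F, and let x ∈ N be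
nonzero with N = √(xS). Set T = S[1/x] ⊆ F. If ⋂_{n≥0} x^n S ≠ 0, then
(S :_F T) = ⋂_{n≥0} x^n S, T is a fractional ideal of S, and if moreover T is completely
integrally closed, then T is the complete integral closure of S. -/
theorem stmt14 {S F : Type*} [CommRing S] [IsDomain S] [IsLocalRing S]
    [Field F] [Algebra S F] [IsFractionRing S F]
    (x : S) (hx0 : x ≠ 0) (hxN : x ∈ IsLocalRing.maximalIdeal S)
    (hrad : (Ideal.span ({x} : Set S)).radical = IsLocalRing.maximalIdeal S)
    (T : Subring F)
    (hT : T = Subring.closure (Set.range (algebraMap S F) ∪ {(algebraMap S F x)⁻¹}))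
    (hnz : (⨅ n : ℕ, Ideal.span ({x ^ n} : Set S)) ≠ ⊥) :
    { q : F | ∀ t ∈ T, q * t ∈ Set.range (algebraMap S F) } =
        (algebraMap S F) '' ↑(⨅ n : ℕ, Ideal.span ({x ^ n} : Set S)) ∧
      (∃ c : S, c ≠ 0 ∧ ∀ t ∈ T, algebraMap S F c * t ∈ Set.range (algebraMap S F)) ∧
      ((∀ θ : F, (∃ c ∈ T, c ≠ 0 ∧ ∀ n : ℕ, c * θ ^ n ∈ T) → θ ∈ T) →
        (T : Set F) = { θ : F | ∃ c : S, c ≠ 0 ∧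
          ∀ n : ℕ, algebraMap S F c * θ ^ n ∈ Set.range (algebraMap S F) }) := by
  have hinj : Function.Injective (algebraMap S F) := IsFractionRing.injective S F
  set f := algebraMap S F with hf
  have hxF : f x ≠ 0 := fun h => hx0 (hinj (by simpa using h))
  have hSsub : ∀ s : S, f s ∈ T := fun s => by
    rw [hT]; exact Subring.subset_closure (Or.inl ⟨s, rfl⟩)
  have hxinv : (f x)⁻¹ ∈ T := by
    rw [hT]; exact Subring.subset_closure (Or.inr rfl)
  -- every element of T has the form a / x^n
  have hform : ∀ t ∈ T, ∃ (a : S) (n : ℕ), t = f a * ((f x)⁻¹) ^ n := by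
    intro t ht
    rw [hT] at ht
    induction ht using Subring.closure_induction with
    | mem y hy =>
      rcases hy with ⟨a, rfl⟩ | hy
      · exact ⟨a, 0, by simp⟩
      · exact ⟨1, 1, by simp [Set.mem_singleton_iff.mp hy]⟩
    | one => exact ⟨1, 0, by simp⟩
    | zero => exact ⟨0, 0, by simp⟩
    | add y z _ _ hy hz =>
      obtain ⟨a, n, rfl⟩ := hy
      obtain ⟨b, m, rfl⟩ := hz
      refine ⟨a * x ^ m + b * x ^ n, n + m, ?_⟩
      have hxinvx : (f x)⁻¹ * f x = 1 := inv_mul_cancel₀ hxF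
      push_cast [map_add, map_mul, map_pow]
      field_simp
      rw [pow_add, add_mul, one_div, inv_pow, inv_pow]
      field_simp
    | neg y _ hy =>
      obtain ⟨a, n, rfl⟩ := hy
      exact ⟨-a, n, by simp⟩
    | mul y z _ _ hy hz =>
      obtain ⟨a, n, rfl⟩ := hy
      obtain ⟨b, m, rfl⟩ := hz
      exact ⟨a * b, n + m, by push_cast [map_mul]; ring⟩
  -- main equality
  have hmain : { q : F | ∀ t ∈ T, q * t ∈ Set.range f } =
      f '' ↑(⨅ n : ℕ, Ideal.span ({x ^ n} : Set S)) := by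
    ext q
    constructor
    · intro hq
      obtain ⟨s, hs⟩ := hq 1 T.one_mem
      rw [mul_one] at hs
      refine ⟨s, ?_, hs⟩
      rw [SetLike.mem_coe, Submodule.mem_iInf]
      intro n
      obtain ⟨u, hu⟩ := hq (((f x)⁻¹) ^ n) (pow_mem hxinv n)
      rw [Ideal.mem_span_singleton]
      refine ⟨u, hinj ?_⟩
      rw [map_mul, map_pow, hs]
      have : f u * (f x) ^ n = q := by
        rw [hu]
        rw [mul_assoc, ← mul_pow, inv_mul_cancel₀ hxF, one_pow, mul_one]
      rw [← this]; ring
    · rintro ⟨s, hs, rfl⟩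
      rw [SetLike.mem_coe, Submodule.mem_iInf] at hs
      intro t ht
      obtain ⟨a, n, rfl⟩ := hform t ht
      obtain ⟨u, hu⟩ := Ideal.mem_span_singleton.mp (hs n)
      refine ⟨u * a, ?_⟩
      have hsf : f s = f x ^ n * f u := by rw [hu, map_mul, map_pow]
      rw [map_mul, hsf]
      rw [inv_pow]
      field_simp
    -- end
  refine ⟨hmain, ?_, ?_⟩
  · obtain ⟨c, hc, hc0⟩ := Submodule.exists_mem_ne_zero_of_ne_bot hnz
    refine ⟨c, hc0, ?_⟩
    have : f c ∈ { q : F | ∀ t ∈ T, q * t ∈ Set.range f } := by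
      rw [hmain]; exact ⟨c, hc, rfl⟩
    exact this
  · intro hcic
    obtain ⟨c, hc, hc0⟩ := Submodule.exists_mem_ne_zero_of_ne_bot hnz
    ext θ
    constructor
    · intro hθ
      refine ⟨c, hc0, fun n => ?_⟩
      have : f c ∈ { q : F | ∀ t ∈ T, q * t ∈ Set.range f } := by
        rw [hmain]; exact ⟨c, hc, rfl⟩
      exact this (θ ^ n) (pow_mem hθ n)
    · rintro ⟨d, hd0, hd⟩
      refine hcic θ ⟨f d, hSsub d, fun h => hd0 (hinj (by simpa using h)), fun n => ?_⟩
      obtain ⟨u, hu⟩ := hd n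
      rw [← hu]; exact hSsub u
end

section
/- Let S be a local domain with maximal ideal N and fraction field F such that (N :_F N) equals the complete integral closure S* of S, and suppose S ≠ S*. Then for every θ ∈ S* \ S, one has θ^{-1}S ∩ S = N; consequently, if S is a coherent ring, then N is a finitely generated ideal of S. -/
/-- Let S be a local domain with maximal ideal N and fraction field F such that
(N :_F N) equals the complete integral closure S* of S, and S ≠ S*. Then for every
θ ∈ S* \ S one has θ⁻¹S ∩ S = N (i.e. { s ∈ S : θs ∈ S } = N); consequently, if S is
coherent (the intersection of two finitely generated ideals is finitely generated),
then N is a finitely generated ideal of S. -/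
theorem stmt16 {S F : Type*} [CommRing S] [IsDomain S] [IsLocalRing S]
    [Field F] [Algebra S F] [IsFractionRing S F]
    (SStar : Set F)
    (hSStar : SStar = { θ : F | ∃ c : S, c ≠ 0 ∧
      ∀ n : ℕ, algebraMap S F c * θ ^ n ∈ Set.range (algebraMap S F) })
    (hcolon : { q : F | ∀ m ∈ IsLocalRing.maximalIdeal S,
        q * algebraMap S F m ∈ (algebraMap S F) '' (IsLocalRing.maximalIdeal S) } = SStar)
    (hne : SStar ≠ Set.range (algebraMap S F)) :
    (∀ θ ∈ SStar, θ ∉ Set.range (algebraMap S F) →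
        { s : S | θ * algebraMap S F s ∈ Set.range (algebraMap S F) } =
          (IsLocalRing.maximalIdeal S : Set S)) ∧
      ((∀ I J : Ideal S, I.FG → J.FG → (I ⊓ J).FG) →
        (IsLocalRing.maximalIdeal S).FG) := by
  have hinj : Function.Injective (algebraMap S F) := IsFractionRing.injective S F
  set N := IsLocalRing.maximalIdeal S with hNdef
  -- range ⊆ SStar
  have hsub : Set.range (algebraMap S F) ⊆ SStar := by
    rintro _ ⟨s, rfl⟩
    rw [← hcolon]
    intro m hm
    exact ⟨s * m, Ideal.mul_mem_left _ s hm, map_mul _ _ _⟩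
  have part1 : ∀ θ ∈ SStar, θ ∉ Set.range (algebraMap S F) →
      { s : S | θ * algebraMap S F s ∈ Set.range (algebraMap S F) } = (N : Set S) := by
    intro θ hθ hθn
    ext s
    simp only [Set.mem_setOf_eq, SetLike.mem_coe]
    constructor
    · rintro ⟨t, ht⟩
      by_contra hs
      have hu : IsUnit s := by
        by_contra h
        exact hs ((IsLocalRing.mem_maximalIdeal s).mpr h)
      obtain ⟨u, rfl⟩ := hu
      refine hθn ⟨t * ↑u⁻¹, ?_⟩
      rw [map_mul, ht, mul_assoc, ← map_mul, Units.mul_inv, map_one, mul_one]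
    · intro hs
      rw [← hcolon] at hθ
      obtain ⟨m, _, hm⟩ := hθ s hs
      exact ⟨m, hm⟩
  refine ⟨part1, fun hcoh => ?_⟩
  obtain ⟨θ, hθ, hθn⟩ : ∃ θ, θ ∈ SStar ∧ θ ∉ Set.range (algebraMap S F) := by
    by_contra h
    push_neg at h
    exact hne (Set.Subset.antisymm h hsub)
  obtain ⟨⟨a, b⟩, hab⟩ := IsLocalization.surj (nonZeroDivisors S) θ
  have hb0 : (b : S) ≠ 0 := nonZeroDivisors.coe_ne_zero b
  have hbF : algebraMap S F (b : S) ≠ 0 := fun h => hb0 (hinj (by rw [h, map_zero]))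
  have ha0 : a ≠ 0 := by
    rintro rfl
    apply hθn
    refine ⟨0, ?_⟩
    rw [map_zero] at hab ⊢
    rcases mul_eq_zero.mp hab with h | h
    · exact h.symm
    · exact absurd h hbF
  have hkey : ∀ s : S, (θ * algebraMap S F s ∈ Set.range (algebraMap S F)) ↔ (b : S) ∣ a * s := by
    intro s
    constructor
    · rintro ⟨t, ht⟩
      refine ⟨t, hinj ?_⟩
      rw [map_mul, map_mul, ← hab, ht]
      ring
    · rintro ⟨c, hc⟩
      refine ⟨c, ?_⟩
      apply mul_right_cancel₀ hbF
      rw [← map_mul, mul_comm c (b : S), ← hc, map_mul, ← hab]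
      ring
  have hNset := part1 θ hθ hθn
  have hmemN : ∀ s : S, s ∈ N ↔ (b : S) ∣ a * s := by
    intro s
    rw [← hkey s]
    exact (Set.ext_iff.mp hNset s).symm
  have finj : Function.Injective (LinearMap.lsmul S S a) := by
    intro x y h
    simp only [LinearMap.lsmul_apply, smul_eq_mul] at h
    exact mul_left_cancel₀ ha0 h
  have hmap : Submodule.map (LinearMap.lsmul S S a) N =
      Ideal.span {a} ⊓ Ideal.span {(b : S)} := by
    ext x
    simp only [Submodule.mem_map, Ideal.mem_inf, Ideal.mem_span_singleton,
      LinearMap.lsmul_apply, smul_eq_mul]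
    constructor
    · rintro ⟨s, hs, rfl⟩
      exact ⟨Dvd.intro s rfl, (hmemN s).mp hs⟩
    · rintro ⟨⟨s, rfl⟩, hbx⟩
      exact ⟨s, (hmemN s).mpr hbx, rfl⟩
  have hfg : (Ideal.span {a} ⊓ Ideal.span {(b : S)}).FG :=
    hcoh _ _ (Submodule.fg_span_singleton a) (Submodule.fg_span_singleton _)
  refine Submodule.fg_of_fg_map_injective _ finj ?_
  rw [hmap]
  exact hfg
end
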